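/- Let λ be a cardinal, let θ < λ be a regular infinite cardinal, let F be a uniform ultrafilter over λ, and let g : λ → λ be monotonically increasing, unbounded in λ, almost one-to-one with respect to θ, and <_F-minimal among such functions (there is no monotonically increasing, unbounded, almost one-to-one h : λ → λ with h <_F g). Let G := {x ⊆ λ : g⁻¹[x] ∈ F}. Then for every function h : λ → λ which is monotonically increasing and regressive on some set x ∈ G (i.e., h(β) < β for every β ∈ x), there exists γ < λ with |h⁻¹({γ})| ≥ θ. -/

import Mathlib

open Cardinal Set

/-- `u` is a member of `[λ]^{ℵ₀-bd}`: a countably infinite subset of `λ`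
(identified with the set of ordinals below `λ.ord`) which is bounded, i.e. `sup u < λ`. -/
def BddCtbl (lam : Cardinal.{0}) (u : Set Ordinal.{0}) : Prop :=
  u ⊆ Set.Iio lam.ord ∧ u.Countable ∧ u.Infinite ∧ sSup u < lam.ord

/-- `λ` is a Magidor cardinal: `λ → [λ]^{ℵ₀-bd}_λ`, i.e. for every coloring
`f : [λ]^{ℵ₀-bd} → λ` there is `A ⊆ λ` of full cardinality `λ` such that `f`
omits some color `γ < λ` on the countable bounded subsets of `A`. -/
def IsMagidorCard (lam : Cardinal.{0}) : Prop :=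
  ∀ f : Set Ordinal.{0} → Ordinal.{0},
    (∀ u, BddCtbl lam u → f u < lam.ord) →
    ∃ A : Set Ordinal.{0}, A ⊆ Set.Iio lam.ord ∧ #A = Cardinal.lift.{1} lam ∧
      ∃ γ < lam.ord, ∀ u ⊆ A, BddCtbl lam u → f u ≠ γ

/-- `F` is a filter over `λ`: a nonempty collection of subsets of `λ` closed under
supersets (within `λ`) and finite (binary) intersections, with `∅ ∉ F`. -/
def IsFilterOn (lam : Cardinal.{0}) (F : Set (Set Ordinal.{0})) : Prop :=
  F.Nonempty ∧ (∀ x ∈ F, x ⊆ Set.Iio lam.ord) ∧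
    (∀ x ∈ F, ∀ y, x ⊆ y → y ⊆ Set.Iio lam.ord → y ∈ F) ∧
    (∀ x ∈ F, ∀ y ∈ F, x ∩ y ∈ F) ∧ ∅ ∉ F

/-- `F` is a Magidor filter over `λ`: a uniform filter over `λ` containing all
end-segments of `λ`, such that every coloring `c : [λ]^{ℵ₀-bd} → λ` omits some
color `γ < λ` on the countable bounded subsets of some member of `F`. -/
def IsMagidorFilter (lam : Cardinal.{0}) (F : Set (Set Ordinal.{0})) : Prop :=
  IsFilterOn lam F ∧
  (∀ x ∈ F, #x = Cardinal.lift.{1} lam) ∧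
  (∀ α < lam.ord, {β | α ≤ β ∧ β < lam.ord} ∈ F) ∧
  (∀ c : Set Ordinal.{0} → Ordinal.{0}, (∀ u, BddCtbl lam u → c u < lam.ord) →
    ∃ x ∈ F, ∃ γ < lam.ord, ∀ u ⊆ x, BddCtbl lam u → c u ≠ γ)

/-- `g : λ → λ` is monotonically increasing (below `λ`). -/
def MonoIncOn (lam : Cardinal.{0}) (g : Ordinal.{0} → Ordinal.{0}) : Prop :=
  ∀ α β : Ordinal.{0}, α ≤ β → β < lam.ord → g α ≤ g β

/-- the range of `g` on `λ` is unbounded in `λ`. -/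
def UnbddIn (lam : Cardinal.{0}) (g : Ordinal.{0} → Ordinal.{0}) : Prop :=
  ∀ β < lam.ord, ∃ α < lam.ord, β ≤ g α

/-- `g` is almost one-to-one with respect to `θ`: every fiber `g⁻¹({γ})` (for `γ < λ`)
has cardinality `< θ`. -/
def AlmostInj (lam θ : Cardinal.{0}) (g : Ordinal.{0} → Ordinal.{0}) : Prop :=
  ∀ γ < lam.ord, #{α : Ordinal.{0} // α < lam.ord ∧ g α = γ} < Cardinal.lift.{1} θ

/-- `g` is a function from `λ` to `λ` which is monotonically increasing, unbounded
in `λ`, and almost one-to-one with respect to `θ`. -/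
def GoodFn (lam θ : Cardinal.{0}) (g : Ordinal.{0} → Ordinal.{0}) : Prop :=
  (∀ α < lam.ord, g α < lam.ord) ∧ MonoIncOn lam g ∧ UnbddIn lam g ∧ AlmostInj lam θ g

/-- `f <_F g` : the set of `α < λ` with `f α < g α` belongs to `F`. -/
def ltF (lam : Cardinal.{0}) (F : Set (Set Ordinal.{0}))
    (f g : Ordinal.{0} → Ordinal.{0}) : Prop :=
  {α | α < lam.ord ∧ f α < g α} ∈ F

/-- let `θ < λ` be regular, `F` a uniform ultrafilter over `λ`, and
`g : λ → λ` monotonically increasing, unbounded, almost one-to-one w.r.t. `θ` and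
`<_F`-minimal among such functions; let `G` be the projection of `F` along `g`. Then
every monotonically increasing `h : λ → λ` which is regressive on some member of `G`
has a fiber `h⁻¹({γ})` (for some `γ < λ`) of cardinality at least `θ`. -/
theorem projection_weak_normality (lam θ : Cardinal.{0})
    (hθreg : θ.IsRegular) (hθlam : θ < lam)
    (F : Set (Set Ordinal.{0})) (hF : IsFilterOn lam F)
    (hunif : ∀ x ∈ F, #x = Cardinal.lift.{1} lam)
    (hultra : ∀ x ⊆ Set.Iio lam.ord, x ∈ F ∨ Set.Iio lam.ord \ x ∈ F)
    (g : Ordinal.{0} → Ordinal.{0}) (hg : GoodFn lam θ g)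
    (hgmin : ∀ h : Ordinal.{0} → Ordinal.{0}, GoodFn lam θ h → ¬ ltF lam F h g)
    (h : Ordinal.{0} → Ordinal.{0})
    (hmaps : ∀ α < lam.ord, h α < lam.ord) (hmono : MonoIncOn lam h)
    (x : Set Ordinal.{0}) (hxsub : x ⊆ Set.Iio lam.ord)
    (hxG : {α | α < lam.ord ∧ g α ∈ x} ∈ F)
    (hregr : ∀ β ∈ x, h β < β) :
    ∃ γ < lam.ord,
      Cardinal.lift.{1} θ ≤ #{α : Ordinal.{0} // α < lam.ord ∧ h α = γ} := by
  by_contra hcon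
  push_neg at hcon
  -- so every fiber of h (below lam) has size < lift θ
  have hfib : ∀ γ < lam.ord, #{α : Ordinal.{0} // α < lam.ord ∧ h α = γ} <
      Cardinal.lift.{1} θ := by
    intro γ hγ; exact hcon γ hγ
  have hθreg' : (Cardinal.lift.{1} θ).IsRegular := by
    constructor
    · simpa using Cardinal.lift_le.{1}.2 hθreg.1
    · rw [← Cardinal.lift_ord, ← Ordinal.lift_cof, hθreg.cof_eq]
  obtain ⟨hgmaps, hgmono, hgunbd, hgainj⟩ := hg
  set H : Ordinal.{0} → Ordinal.{0} := fun α => h (g α) with hH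
  -- fibers of H are small
  have hHfib : ∀ γ < lam.ord, #{α : Ordinal.{0} // α < lam.ord ∧ H α = γ} <
      Cardinal.lift.{1} θ := by
    intro γ hγ
    have hinj : Function.Injective
        (fun p : {α : Ordinal.{0} // α < lam.ord ∧ H α = γ} =>
          (⟨⟨g p.1, hgmaps p.1 p.2.1, p.2.2⟩,
            ⟨p.1, p.2.1, rfl⟩⟩ :
            Σ δ : {δ : Ordinal.{0} // δ < lam.ord ∧ h δ = γ},
              {α : Ordinal.{0} // α < lam.ord ∧ g α = δ.1})) := by
      intro p q hpq
      have := congrArg (fun s : (Σ δ : {δ : Ordinal.{0} // δ < lam.ord ∧ h δ = γ},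
          {α : Ordinal.{0} // α < lam.ord ∧ g α = δ.1}) => (s.2.1 : Ordinal.{0})) hpq
      exact Subtype.ext this
    have h1 := Cardinal.mk_le_of_injective hinj
    rw [Cardinal.mk_sigma] at h1
    refine h1.trans_lt ?_
    refine Cardinal.sum_lt_of_isRegular hθreg' (hfib γ hγ) ?_
    intro δ
    exact hgainj δ.1 δ.2.1
  -- H maps into lam
  have hHmaps : ∀ α < lam.ord, H α < lam.ord := fun α hα => hmaps _ (hgmaps α hα)
  -- H monotone
  have hHmono : MonoIncOn lam H := by
    intro α β hab hβ
    exact hmono _ _ (hgmono α β hab hβ) (hgmaps β hβ)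
  have hlaminf : Cardinal.aleph0 ≤ lam := hθreg.1.trans hθlam.le
  -- H unbounded
  have hHunbd : UnbddIn lam H := by
    by_contra hb
    simp only [UnbddIn, not_forall, not_exists] at hb
    obtain ⟨β, hβ, hball⟩ := hb
    have hball' : ∀ α < lam.ord, H α < β := fun α hα =>
      lt_of_not_ge fun hle => hball α ⟨hα, hle⟩
    -- inject Iio lam.ord into sigma of fibers
    have hinj : Function.Injective
        (fun p : {α : Ordinal.{0} // α < lam.ord} =>
          (⟨⟨H p.1, hball' p.1 p.2⟩, ⟨p.1, p.2, rfl⟩⟩ :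
            Σ δ : {δ : Ordinal.{0} // δ < β},
              {α : Ordinal.{0} // α < lam.ord ∧ H α = δ.1})) := by
      intro p q hpq
      have := congrArg (fun s : (Σ δ : {δ : Ordinal.{0} // δ < β},
          {α : Ordinal.{0} // α < lam.ord ∧ H α = δ.1}) => (s.2.1 : Ordinal.{0})) hpq
      exact Subtype.ext this
    have h1 := Cardinal.mk_le_of_injective hinj
    rw [Cardinal.mk_sigma] at h1
    have h2 : #{α : Ordinal.{0} // α < lam.ord} = Cardinal.lift.{1} lam := by
      have := Ordinal.mk_Iio_ordinal lam.ord
      simp only [Cardinal.card_ord] at this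
      convert this using 2
      rfl
    have h3 : Cardinal.sum
        (fun δ : {δ : Ordinal.{0} // δ < β} =>
          #{α : Ordinal.{0} // α < lam.ord ∧ H α = δ.1}) < Cardinal.lift.{1} lam := by
      refine (Cardinal.sum_le_sum _ (fun _ => Cardinal.lift.{1} θ) ?_).trans_lt ?_
      · intro δ
        exact (hHfib δ.1 (δ.2.trans hβ)).le
      · rw [Cardinal.sum_const]
        have hmkβ : #{δ : Ordinal.{0} // δ < β} = Cardinal.lift.{1} β.card := by
          have := Ordinal.mk_Iio_ordinal β
          convert this using 2
          rfl
        rw [hmkβ]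
        simp only [Cardinal.lift_id, Cardinal.lift_lift]
        rw [← Cardinal.lift_mul, Cardinal.lift_lt]
        exact Cardinal.mul_lt_of_lt hlaminf
          (by rwa [← Cardinal.lt_ord]) hθlam
    rw [h2] at h1
    exact absurd h1 (not_le_of_gt h3)
  -- H is good
  have hHgood : GoodFn lam θ H := ⟨hHmaps, hHmono, hHunbd, hHfib⟩
  -- H <_F g
  refine hgmin H hHgood ?_
  obtain ⟨_, hFsub, hFsup, _, _⟩ := hF
  have hsub : {α | α < lam.ord ∧ g α ∈ x} ⊆ {α | α < lam.ord ∧ H α < g α} := by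
    intro α hα
    exact ⟨hα.1, hregr _ hα.2⟩
  exact hFsup _ hxG _ hsub (fun α hα => hα.1)
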